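/- For any finite X and any nonempty concept class F on X, the average teaching dimension plus the average 1-certificate complexity is at least |X|: (Σ_{f∈F} TD_F(f))/|F| + (Σ_{f∈F} C¹_F(f))/|F| ≥ |X|. -/

import Mathlib

variable {X : Type*} [Fintype X] [DecidableEq X]

/-- `f` and `g` agree on all points of `S`. -/
def AgreeOn (f g : X → Bool) (S : Finset X) : Prop := ∀ x ∈ S, f x = g x

/-- `S` is a teaching set for `f` w.r.t. `F`: `f` is the unique member of `F`
consistent with `f` on `S`. -/
def IsTeachingSet (F : Finset (X → Bool)) (f : X → Bool) (S : Finset X) : Prop :=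
  ∀ g ∈ F, AgreeOn f g S → g = f

/-- Teaching dimension of `f` w.r.t. `F`: minimum size of a teaching set. -/
noncomputable def TD (F : Finset (X → Bool)) (f : X → Bool) : ℕ :=
  sInf {n | ∃ S : Finset X, IsTeachingSet F f S ∧ S.card = n}

/-- `S` is a 1-certificate for `f` w.r.t. `F`: every function agreeing with `f` on `S`
belongs to `F`. -/
def IsOneCert (F : Finset (X → Bool)) (f : X → Bool) (S : Finset X) : Prop :=
  ∀ g : X → Bool, AgreeOn f g S → g ∈ F

/-- 1-certificate complexity of `f` w.r.t. `F`. -/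
noncomputable def C1 (F : Finset (X → Bool)) (f : X → Bool) : ℕ :=
  sInf {n | ∃ S : Finset X, IsOneCert F f S ∧ S.card = n}

/-- `S` is a 0-certificate for `f` w.r.t. `F`: no member of `F` agrees with `f` on `S`. -/
def IsZeroCert (F : Finset (X → Bool)) (f : X → Bool) (S : Finset X) : Prop :=
  ∀ g ∈ F, ¬ AgreeOn f g S

/-- 0-certificate complexity of `f` w.r.t. `F`. -/
noncomputable def C0 (F : Finset (X → Bool)) (f : X → Bool) : ℕ :=
  sInf {n | ∃ S : Finset X, IsZeroCert F f S ∧ S.card = n}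

/-- aTD(F) + aC¹(F) ≥ |X| for nonempty F. -/
theorem card_le_aTD_add_aC1 (F : Finset (X → Bool)) (hF : F.Nonempty) :
    (Fintype.card X : ℚ) ≤
      (∑ f ∈ F, (TD F f : ℚ)) / F.card + (∑ f ∈ F, (C1 F f : ℚ)) / F.card := by
  have key : ∀ f ∈ F, Fintype.card X ≤ TD F f + C1 F f := by
    intro f hf
    have hTDne : {n | ∃ S : Finset X, IsTeachingSet F f S ∧ S.card = n}.Nonempty := by
      refine ⟨(Finset.univ : Finset X).card, Finset.univ, ?_, rfl⟩
      intro g _ hag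
      funext x; exact (hag x (Finset.mem_univ x)).symm
    have hC1ne : {n | ∃ S : Finset X, IsOneCert F f S ∧ S.card = n}.Nonempty := by
      refine ⟨(Finset.univ : Finset X).card, Finset.univ, ?_, rfl⟩
      intro g hag
      have : g = f := by funext x; exact (hag x (Finset.mem_univ x)).symm
      rwa [this]
    obtain ⟨S, hS, hScard⟩ := Nat.sInf_mem hTDne
    obtain ⟨T, hT, hTcard⟩ := Nat.sInf_mem hC1ne
    have hcover : S ∪ T = Finset.univ := by
      apply Finset.eq_univ_of_forall
      intro x
      by_contra hx
      have hxS : x ∉ S := fun h => hx (Finset.mem_union_left _ h)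
      have hxT : x ∉ T := fun h => hx (Finset.mem_union_right _ h)
      set g : X → Bool := Function.update f x (!f x) with hg
      have hagT : AgreeOn f g T := by
        intro y hy
        have : y ≠ x := fun h => hxT (h ▸ hy)
        simp [hg, Function.update_of_ne this]
      have hgF : g ∈ F := hT g hagT
      have hagS : AgreeOn f g S := by
        intro y hy
        have : y ≠ x := fun h => hxS (h ▸ hy)
        simp [hg, Function.update_of_ne this]
      have : g = f := hS g hgF hagS
      have := congrFun this x
      simp [hg] at this
    calc Fintype.card X = (S ∪ T).card := by rw [hcover]; simp
      _ ≤ S.card + T.card := Finset.card_union_le S T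
      _ = TD F f + C1 F f := by rw [hScard, hTcard]; rfl
  have hFcard : (0 : ℚ) < F.card := by
    exact_mod_cast Finset.card_pos.mpr hF
  rw [← add_div, le_div_iff₀ hFcard]
  calc (Fintype.card X : ℚ) * F.card = ∑ _f ∈ F, (Fintype.card X : ℚ) := by
        rw [Finset.sum_const, nsmul_eq_mul, mul_comm]
    _ ≤ ∑ f ∈ F, ((TD F f : ℚ) + (C1 F f : ℚ)) := by
        apply Finset.sum_le_sum
        intro f hf
        exact_mod_cast key f hf
    _ = ∑ f ∈ F, (TD F f : ℚ) + ∑ f ∈ F, (C1 F f : ℚ) := Finset.sum_add_distrib
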